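/- arXiv:2401.13021 — 2 statements merged into one kernel-verified Lean document; each statement's English description precedes it below -/
import Mathlib

section
/- Let f be a function continuous on the closed unit disk in ℂ and holomorphic on the open unit disk, such that f maps the boundary circle into the nonnegative real axis [0,∞). Then f is constant. -/
open Metric Set Complex

/-- A function continuous on the closed unit disk, holomorphic on the open unit disk,
mapping the boundary circle into `[0,∞) ⊂ ℝ ⊂ ℂ`, is constant on the closed disk. -/
theorem boundary_nonneg_real_implies_constant (f : ℂ → ℂ)
    (hc : ContinuousOn f (Metric.closedBall 0 1))
    (hd : DifferentiableOn ℂ f (Metric.ball 0 1))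
    (hb : ∀ z : ℂ, ‖z‖ = 1 → ∃ r : ℝ, 0 ≤ r ∧ f z = r) :
    ∀ z ∈ Metric.closedBall (0:ℂ) 1, ∀ w ∈ Metric.closedBall (0:ℂ) 1, f z = f w := by
  have hcl : closure (ball (0:ℂ) 1) = closedBall (0:ℂ) 1 := closure_ball 0 one_ne_zero
  have hfr : frontier (ball (0:ℂ) 1) = sphere (0:ℂ) 1 := frontier_ball 0 one_ne_zero
  have hbd : Bornology.IsBounded (ball (0:ℂ) 1) := isBounded_ball
  -- the two auxiliary functions exp(±i f)
  have hdc : ∀ c : ℂ, DiffContOnCl ℂ (fun z => Complex.exp (c * f z)) (ball (0:ℂ) 1) := by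
    intro c
    refine ⟨DifferentiableOn.cexp ((differentiableOn_const c).mul hd), ?_⟩
    rw [hcl]
    exact ((continuousOn_const.mul hc)).cexp
  have key : ∀ c : ℂ, (∀ z : ℂ, ‖z‖ = 1 → ‖Complex.exp (c * f z)‖ ≤ 1) →
      ∀ z ∈ closedBall (0:ℂ) 1, ‖Complex.exp (c * f z)‖ ≤ 1 := by
    intro c hC z hz
    refine Complex.norm_le_of_forall_mem_frontier_norm_le hbd (hdc c) ?_ ?_
    · intro w hw
      rw [hfr] at hw
      exact hC w (by simpa using hw)
    · rw [hcl]; exact hz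
  have hbound : ∀ z : ℂ, ‖z‖ = 1 → ∀ c : ℂ, c.re = 0 → ‖Complex.exp (c * f z)‖ ≤ 1 := by
    intro z hz c hcre
    obtain ⟨r, hr0, hr⟩ := hb z hz
    rw [hr, Complex.norm_exp]
    have : (c * (r:ℂ)).re = 0 := by
      simp [Complex.mul_re, hcre]
    rw [this, Real.exp_zero]
  -- imaginary part vanishes on the closed ball
  have him : ∀ z ∈ closedBall (0:ℂ) 1, (f z).im = 0 := by
    intro z hz
    have h1 : ‖Complex.exp (Complex.I * f z)‖ ≤ 1 :=
      key Complex.I (fun w hw => hbound w hw Complex.I (by simp)) z hz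
    have h2 : ‖Complex.exp (-Complex.I * f z)‖ ≤ 1 :=
      key (-Complex.I) (fun w hw => hbound w hw (-Complex.I) (by simp)) z hz
    rw [Complex.norm_exp] at h1 h2
    have e1 : (Complex.I * f z).re = -(f z).im := by simp [Complex.mul_re]
    have e2 : (-Complex.I * f z).re = (f z).im := by simp [Complex.mul_re]
    rw [e1] at h1; rw [e2] at h2
    have := Real.exp_le_one_iff.mp h1
    have := Real.exp_le_one_iff.mp h2
    linarith
  -- open mapping theorem: f is constant on the open ball
  have han : AnalyticOnNhd ℂ f (ball (0:ℂ) 1) := hd.analyticOnNhd isOpen_ball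
  have hconst : ∃ w, ∀ z ∈ ball (0:ℂ) 1, f z = w := by
    rcases han.is_constant_or_isOpen (convex_ball (0:ℂ) 1).isPreconnected with h | h
    · exact h
    · exfalso
      have hopen : IsOpen (f '' ball (0:ℂ) 1) := h _ Subset.rfl isOpen_ball
      have hmem : f 0 ∈ f '' ball (0:ℂ) 1 := ⟨0, by simp, rfl⟩
      obtain ⟨ε, hε, hball⟩ := Metric.isOpen_iff.mp hopen _ hmem
      have : f 0 + (ε:ℂ)/2 * Complex.I ∈ f '' ball (0:ℂ) 1 := by
        apply hball
        have hdist : dist (f 0 + (ε:ℂ)/2 * Complex.I) (f 0) = ε/2 := by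
          rw [Complex.dist_eq, show f 0 + (ε:ℂ)/2 * Complex.I - f 0 = (ε:ℂ)/2 * Complex.I by ring,
            norm_mul, Complex.norm_I, mul_one, norm_div, Complex.norm_real, Real.norm_eq_abs, Complex.norm_two,
            abs_of_pos hε]
        rw [Metric.mem_ball, hdist]
        linarith
      obtain ⟨w, hw, hfw⟩ := this
      have h1 : (f w).im = 0 := him w (ball_subset_closedBall hw)
      have h2 : (f 0).im = 0 := him 0 (by simp)
      rw [hfw] at h1
      simp [Complex.add_im, h2] at h1
      linarith
  obtain ⟨w, hw⟩ := hconst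
  -- extend to the closed ball by continuity
  have heq : EqOn f (fun _ => w) (closedBall (0:ℂ) 1) := by
    refine Set.EqOn.of_subset_closure (fun z hz => hw z hz) hc continuousOn_const
      ball_subset_closedBall (by rw [hcl])
  intro z hz z' hz'
  rw [heq hz, heq hz']
end

section
/- Let f be continuous on the closed unit disk, holomorphic on the open unit disk, with |f(z)| = 1 for all z on the boundary circle. Then f is a finite Blaschke product: there exist an integer d ≥ 0, a constant c with |c| = 1, and points a₁, …, a_d in the open unit disk such that f(z) = c·∏_{i=1}^{d} (z − aᵢ)/(1 − \overline{aᵢ}·z) for all z in the closed disk. -/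
open Metric Filter Set Complex Function Topology

private lemma one_mem_cb : (1:ℂ) ∈ Metric.closedBall (0:ℂ) 1 := by
  simp [Metric.mem_closedBall, dist_zero_right]

/-- Two functions continuous on the closed unit ball agreeing on the open ball agree on the
closed ball. -/
private lemma eqOn_closedBall_ext {f g : ℂ → ℂ}
    (hf : ContinuousOn f (Metric.closedBall 0 1))
    (hg : ContinuousOn g (Metric.closedBall 0 1))
    (h : Set.EqOn f g (Metric.ball 0 1)) : Set.EqOn f g (Metric.closedBall 0 1) := by
  intro z hz
  have hzc : z ∈ closure (Metric.ball (0:ℂ) 1) := by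
    rwa [closure_ball (0:ℂ) one_ne_zero]
  have hne : (𝓝[Metric.ball (0:ℂ) 1] z).NeBot := mem_closure_iff_nhdsWithin_neBot.mp hzc
  have tf : Filter.Tendsto f (𝓝[Metric.ball (0:ℂ) 1] z) (𝓝 (f z)) :=
    (hf z hz).mono Metric.ball_subset_closedBall
  have tg : Filter.Tendsto g (𝓝[Metric.ball (0:ℂ) 1] z) (𝓝 (g z)) :=
    (hg z hz).mono Metric.ball_subset_closedBall
  have hfg : f =ᶠ[𝓝[Metric.ball (0:ℂ) 1] z] g :=
    eventually_mem_nhdsWithin.mono fun x hx => h hx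
  exact tendsto_nhds_unique (tf.congr' hfg) tg

/-- Under our standing hypotheses `f` is not eventually zero at any interior point. -/
private lemma not_ev_zero {f : ℂ → ℂ}
    (hc : ContinuousOn f (Metric.closedBall 0 1))
    (hd : DifferentiableOn ℂ f (Metric.ball 0 1))
    (hb : ∀ z : ℂ, ‖z‖ = 1 → ‖f z‖ = 1)
    {b : ℂ} (hbm : b ∈ Metric.ball (0:ℂ) 1) :
    ¬ ∀ᶠ z in 𝓝 b, f z = 0 := by
  intro h
  have han : AnalyticOnNhd ℂ f (Metric.ball 0 1) := hd.analyticOnNhd Metric.isOpen_ball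
  have h0 : Set.EqOn f 0 (Metric.ball 0 1) :=
    han.eqOn_zero_of_preconnected_of_eventuallyEq_zero
      (convex_ball (0:ℂ) 1).isPreconnected hbm
      (by filter_upwards [h] with z hz; simpa using hz)
  have hK : Set.EqOn f 0 (Metric.closedBall 0 1) :=
    eqOn_closedBall_ext hc continuousOn_const h0
  have h1 := hb 1 (by norm_num)
  rw [hK one_mem_cb] at h1
  norm_num at h1

open Classical in
/-- The (natural number) order of vanishing of `f` at `a`. -/
private noncomputable def ordN (f : ℂ → ℂ) (a : ℂ) : ℕ :=
  if h : AnalyticAt ℂ f a then (analyticOrderAt f a).toNat else 0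

private lemma ordN_factor {f : ℂ → ℂ} {a : ℂ} (hf : AnalyticAt ℂ f a)
    (hne : ¬ ∀ᶠ z in 𝓝 a, f z = 0) :
    ∃ g : ℂ → ℂ, AnalyticAt ℂ g a ∧ g a ≠ 0 ∧
      ∀ᶠ z in 𝓝 a, f z = (z - a) ^ (ordN f a) * g z := by
  have ht : analyticOrderAt f a ≠ ⊤ := fun h => hne (analyticOrderAt_eq_top.mp h)
  obtain ⟨n, hn⟩ := WithTop.ne_top_iff_exists.mp ht
  have hord : ordN f a = n := by
    unfold ordN; rw [dif_pos hf, ← hn]; rfl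
  rw [hord]
  obtain ⟨g, hg, hg0, heq⟩ := (hf.analyticOrderAt_eq_natCast (n := n)).mp hn.symm
  exact ⟨g, hg, hg0, by filter_upwards [heq] with z hz; simpa [smul_eq_mul] using hz⟩

private lemma ordN_eq {f g : ℂ → ℂ} {a : ℂ} (hf : AnalyticAt ℂ f a)
    (hg : AnalyticAt ℂ g a) (hg0 : g a ≠ 0) (n : ℕ)
    (heq : ∀ᶠ z in 𝓝 a, f z = (z - a) ^ n * g z) : ordN f a = n := by
  have : analyticOrderAt f a = n := (hf.analyticOrderAt_eq_natCast (n := n)).mpr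
    ⟨g, hg, hg0, by filter_upwards [heq] with z hz; simpa [smul_eq_mul] using hz⟩
  unfold ordN
  rw [dif_pos hf, this]
  simp

/-- Multiplying by an analytic function nonvanishing at `b` does not change the order. -/
private lemma ordN_mul_eq {u F f : ℂ → ℂ} {b : ℂ} (huf : ∀ z, f z = u z * F z)
    (hu : AnalyticAt ℂ u b) (hu0 : u b ≠ 0) (hF : AnalyticAt ℂ F b)
    (hne : ¬ ∀ᶠ z in 𝓝 b, F z = 0) : ordN f b = ordN F b := by
  obtain ⟨g, hg, hg0, heq⟩ := ordN_factor hF hne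
  have hfan : AnalyticAt ℂ f b := by
    have : f = fun z => u z * F z := funext huf
    rw [this]; exact hu.mul hF
  refine ordN_eq hfan (hu.mul hg) (mul_ne_zero hu0 hg0) _ ?_
  filter_upwards [heq] with z hz
  rw [huf z, hz, Pi.mul_apply]; ring

/-- Dividing out a simple zero with `dslope` drops the order by exactly one. -/
private lemma ordN_succ {f : ℂ → ℂ} {a : ℂ} (hfa : f a = 0)
    (hF : AnalyticAt ℂ (dslope f a) a) (hne : ¬ ∀ᶠ z in 𝓝 a, dslope f a z = 0) :
    ordN f a = ordN (dslope f a) a + 1 := by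
  obtain ⟨g, hg, hg0, heq⟩ := ordN_factor hF hne
  have hfeq : ∀ z, f z = (z - a) * dslope f a z := by
    intro z
    have h := sub_smul_dslope f a z
    rw [smul_eq_mul, hfa, sub_zero] at h
    exact h.symm
  have hfan : AnalyticAt ℂ f a := by
    have : f = fun z => (z - a) * dslope f a z := funext hfeq
    rw [this]; exact (analyticAt_id.sub analyticAt_const).mul hF
  refine ordN_eq hfan hg hg0 _ ?_
  filter_upwards [heq] with z hz
  rw [hfeq z, hz, pow_succ]; ring

private lemma blaschke_aux : ∀ n : ℕ, ∀ f : ℂ → ℂ,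
    ContinuousOn f (Metric.closedBall 0 1) →
    DifferentiableOn ℂ f (Metric.ball 0 1) →
    (∀ z : ℂ, ‖z‖ = 1 → ‖f z‖ = 1) →
    ∀ s : Finset ℂ, (↑s ⊆ Metric.ball (0:ℂ) 1) →
    (∀ z ∈ Metric.closedBall (0:ℂ) 1, f z = 0 → z ∈ s) →
    (∑ b ∈ s, ordN f b ≤ n) →
    ∃ (d : ℕ) (c : ℂ) (a : Fin d → ℂ), ‖c‖ = 1 ∧ (∀ i, ‖a i‖ < 1) ∧
      ∀ z ∈ Metric.closedBall (0:ℂ) 1,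
        f z = c * ∏ i, (z - a i) / (1 - (starRingEnd ℂ) (a i) * z) := by
  intro n
  induction n using Nat.strong_induction_on with
  | _ n IH =>
    intro f hc hd hb s hs hZ hsum
    have hcl : closure (Metric.ball (0:ℂ) 1) = Metric.closedBall 0 1 :=
      closure_ball 0 one_ne_zero
    by_cases hzero : ∃ a ∈ Metric.closedBall (0:ℂ) 1, f a = 0
    · -- inductive step: divide out a Blaschke factor at a zero `a`
      obtain ⟨a, haK, hfa⟩ := hzero
      have has : a ∈ s := hZ a haK hfa
      have haB : a ∈ Metric.ball (0:ℂ) 1 := hs has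
      have hanorm : ‖a‖ < 1 := by simpa [dist_zero_right] using haB
      set F := dslope f a with hFdef
      have hfeq : ∀ z, f z = (z - a) * F z := by
        intro z
        have h := sub_smul_dslope f a z
        rw [smul_eq_mul, hfa, sub_zero] at h
        exact h.symm
      have hden : ∀ z ∈ Metric.closedBall (0:ℂ) 1, (1 : ℂ) - (starRingEnd ℂ) a * z ≠ 0 := by
        intro z hz h0
        have hz1 : ‖z‖ ≤ 1 := by simpa [dist_zero_right] using hz
        have hlt : ‖(starRingEnd ℂ) a * z‖ < 1 := by
          rw [norm_mul, RCLike.norm_conj]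
          nlinarith [norm_nonneg z, norm_nonneg a]
        rw [sub_eq_zero] at h0
        rw [← h0] at hlt
        norm_num at hlt
      have hnhball : Metric.ball (0:ℂ) 1 ∈ 𝓝 a := Metric.isOpen_ball.mem_nhds haB
      have hFd : DifferentiableOn ℂ F (Metric.ball 0 1) :=
        (Complex.differentiableOn_dslope hnhball).mpr hd
      have hFc : ContinuousOn F (Metric.closedBall 0 1) := by
        have hnh : Metric.closedBall (0:ℂ) 1 ∈ 𝓝 a :=
          Filter.mem_of_superset hnhball Metric.ball_subset_closedBall
        exact (continuousOn_dslope hnh).mpr ⟨hc, hd.differentiableAt hnhball⟩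
      set g : ℂ → ℂ := fun z => (1 - (starRingEnd ℂ) a * z) * F z with hgdef
      have hgc : ContinuousOn g (Metric.closedBall 0 1) :=
        ((continuous_const.sub (continuous_const.mul continuous_id)).continuousOn).mul hFc
      have hgd : DifferentiableOn ℂ g (Metric.ball 0 1) :=
        (((differentiable_const _).sub ((differentiable_const _).mul differentiable_id)).differentiableOn).mul hFd
      have hgb : ∀ z : ℂ, ‖z‖ = 1 → ‖g z‖ = 1 := by
        intro z hz1
        have hza : z ≠ a := by
          intro h; rw [h] at hz1; exact absurd hz1 (ne_of_lt hanorm)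
        have hzane : z - a ≠ 0 := sub_ne_zero.2 hza
        have hFz : F z = (z - a)⁻¹ * f z := by
          rw [hFdef, dslope_of_ne f hza, slope_def_field, hfa, sub_zero, div_eq_inv_mul]
        have hzz : z * (starRingEnd ℂ) z = 1 := by
          rw [Complex.mul_conj]
          have h1 : Complex.normSq z = 1 := by
            have := Complex.sq_norm z
            rw [hz1] at this
            rw [← this]; norm_num
          rw [h1, Complex.ofReal_one]
        have hkey : ‖(1:ℂ) - (starRingEnd ℂ) a * z‖ = ‖z - a‖ := by
          have hconj : (starRingEnd ℂ) ((1:ℂ) - (starRingEnd ℂ) a * z)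
              = (starRingEnd ℂ) z * (z - a) := by
            rw [map_sub, map_mul, Complex.conj_conj, map_one, mul_sub,
              mul_comm ((starRingEnd ℂ) z) z, hzz]
            ring
          calc ‖(1:ℂ) - (starRingEnd ℂ) a * z‖
              = ‖(starRingEnd ℂ) ((1:ℂ) - (starRingEnd ℂ) a * z)‖ := (RCLike.norm_conj _).symm
            _ = ‖(starRingEnd ℂ) z‖ * ‖z - a‖ := by rw [hconj, norm_mul]
            _ = ‖z - a‖ := by rw [RCLike.norm_conj, hz1, one_mul]
        have hgz : g z = (1 - (starRingEnd ℂ) a * z) * F z := rfl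
        have : ‖g z‖ = ‖z - a‖ * (‖z - a‖⁻¹ * ‖f z‖) := by
          rw [hgz, norm_mul, hkey, hFz, norm_mul, norm_inv]
        rw [this, hb z hz1]
        field_simp
      -- zeros of g are among zeros of f
      have hgZ : ∀ z ∈ Metric.closedBall (0:ℂ) 1, g z = 0 → z ∈ s := by
        intro z hz h0
        rcases mul_eq_zero.mp h0 with h | h
        · exact absurd h (hden z hz)
        · exact hZ z hz (by rw [hfeq z, h, mul_zero])
      -- order bookkeeping
      have hanF : ∀ b ∈ Metric.ball (0:ℂ) 1, AnalyticAt ℂ F b :=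
        fun b hb' => (hFd.analyticOnNhd Metric.isOpen_ball) b hb'
      have hneF : ∀ b ∈ Metric.ball (0:ℂ) 1, ¬ ∀ᶠ z in 𝓝 b, F z = 0 := by
        intro b hb' hev
        exact not_ev_zero hc hd hb hb'
          (by filter_upwards [hev] with z hz; rw [hfeq z, hz, mul_zero])
      have hordg : ∀ b ∈ Metric.ball (0:ℂ) 1, ordN g b = ordN F b := by
        intro b hb'
        refine ordN_mul_eq (fun z => rfl) ?_ ?_ (hanF b hb') (hneF b hb')
        · exact analyticAt_const.sub (analyticAt_const.mul analyticAt_id)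
        · exact hden b (Metric.ball_subset_closedBall hb')
      have hordf : ∀ b ∈ Metric.ball (0:ℂ) 1, b ≠ a → ordN f b = ordN F b := by
        intro b hb' hba
        exact ordN_mul_eq hfeq (analyticAt_id.sub analyticAt_const)
          (sub_ne_zero.2 hba) (hanF b hb') (hneF b hb')
      have horda : ordN f a = ordN F a + 1 := ordN_succ hfa (hanF a haB) (hneF a haB)
      have hsum2 : ∑ b ∈ s, ordN g b + 1 ≤ n := by
        have e1 : ∑ b ∈ s, ordN f b = ordN f a + ∑ b ∈ s.erase a, ordN f b :=
          (Finset.add_sum_erase s _ has).symm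
        have e3 : ∑ b ∈ s, ordN g b = ordN g a + ∑ b ∈ s.erase a, ordN g b :=
          (Finset.add_sum_erase s _ has).symm
        have e2 : ∑ b ∈ s.erase a, ordN f b = ∑ b ∈ s.erase a, ordN g b := by
          refine Finset.sum_congr rfl fun b hb' => ?_
          have hbB : b ∈ Metric.ball (0:ℂ) 1 := hs (Finset.mem_of_mem_erase hb')
          rw [hordf b hbB (Finset.ne_of_mem_erase hb'), hordg b hbB]
        have e4 : ordN g a = ordN F a := hordg a haB
        omega
      obtain ⟨d, c, aa, hcn, haa, hform⟩ :=
        IH (∑ b ∈ s, ordN g b) (by omega) g hgc hgd hgb s hs hgZ le_rfl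
      refine ⟨d + 1, c, Fin.cons a aa, hcn, ?_, ?_⟩
      · intro i
        refine Fin.cases ?_ ?_ i
        · simpa using hanorm
        · intro j; simpa using haa j
      · intro z hz
        have hfg : f z = g z * ((z - a) / (1 - (starRingEnd ℂ) a * z)) := by
          have hgz : g z = (1 - (starRingEnd ℂ) a * z) * F z := rfl
          rw [hfeq z, hgz, mul_comm (1 - (starRingEnd ℂ) a * z) (F z), mul_assoc, mul_div_cancel₀ (z - a) (hden z hz)]
          ring
        rw [hfg, hform z hz]
        simp only [Fin.prod_univ_succ, Fin.cons_zero, Fin.cons_succ]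
        ring
    · -- base case: no zeros, `f` is a unimodular constant
      push_neg at hzero
      have hdc : DiffContOnCl ℂ f (Metric.ball 0 1) := ⟨hd, by rwa [hcl]⟩
      have hfr : frontier (Metric.ball (0:ℂ) 1) = Metric.sphere 0 1 :=
        frontier_ball 0 one_ne_zero
      have hle : ∀ z ∈ Metric.closedBall (0:ℂ) 1, ‖f z‖ ≤ 1 := by
        intro z hz
        refine Complex.norm_le_of_forall_mem_frontier_norm_le Metric.isBounded_ball hdc
          ?_ (by rwa [hcl])
        intro w hw
        rw [hfr] at hw
        exact (hb w (by simpa [dist_zero_right] using hw)).le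
      have hge : ∀ z ∈ Metric.closedBall (0:ℂ) 1, 1 ≤ ‖f z‖ := by
        intro z hz
        have hdc' : DiffContOnCl ℂ (fun w => (f w)⁻¹) (Metric.ball 0 1) :=
          ⟨hd.inv fun w hw => hzero w (Metric.ball_subset_closedBall hw),
           by rw [hcl]; exact hc.inv₀ hzero⟩
        have hinv : ‖(f z)⁻¹‖ ≤ 1 := by
          refine Complex.norm_le_of_forall_mem_frontier_norm_le Metric.isBounded_ball hdc'
            ?_ (by rwa [hcl])
          intro w hw
          rw [hfr] at hw
          rw [norm_inv, hb w (by simpa [dist_zero_right] using hw)]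
          norm_num
        rw [norm_inv] at hinv
        have hpos : 0 < ‖f z‖ := norm_pos_iff.2 (hzero z hz)
        have hmul : ‖f z‖⁻¹ * ‖f z‖ = 1 := inv_mul_cancel₀ hpos.ne'
        nlinarith
      have h0K : (0:ℂ) ∈ Metric.closedBall (0:ℂ) 1 := by simp
      have hf0 : ‖f 0‖ = 1 := le_antisymm (hle 0 h0K) (hge 0 h0K)
      have hmax : IsMaxOn (norm ∘ f) (Metric.ball 0 1) 0 := by
        intro z hz
        simp only [Function.comp, mem_setOf_eq, hf0]
        exact hle z (Metric.ball_subset_closedBall hz)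
      have heq : Set.EqOn f (Function.const ℂ (f 0)) (closure (Metric.ball (0:ℂ) 1)) :=
        Complex.eqOn_closure_of_isPreconnected_of_isMaxOn_norm
          (convex_ball (0:ℂ) 1).isPreconnected Metric.isOpen_ball hdc
          (Metric.mem_ball_self one_pos) hmax
      refine ⟨0, f 0, Fin.elim0, hf0, fun i => i.elim0, ?_⟩
      intro z hz
      have : f z = f 0 := heq (by rwa [hcl])
      simp [this]

/-- A function continuous on the closed unit disk, holomorphic on the open unit disk,
with unimodular boundary values, is a finite Blaschke product. -/
theorem finite_blaschke_product (f : ℂ → ℂ)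
    (hc : ContinuousOn f (Metric.closedBall 0 1))
    (hd : DifferentiableOn ℂ f (Metric.ball 0 1))
    (hb : ∀ z : ℂ, ‖z‖ = 1 → ‖f z‖ = 1) :
    ∃ (d : ℕ) (c : ℂ) (a : Fin d → ℂ), ‖c‖ = 1 ∧ (∀ i, ‖a i‖ < 1) ∧
      ∀ z ∈ Metric.closedBall (0:ℂ) 1,
        f z = c * ∏ i, (z - a i) / (1 - (starRingEnd ℂ) (a i) * z) := by
  classical
  set Z := {z ∈ Metric.closedBall (0:ℂ) 1 | f z = 0} with hZdef
  have hZK : Z ⊆ Metric.closedBall (0:ℂ) 1 := fun z hz => hz.1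
  have hZball : Z ⊆ Metric.ball (0:ℂ) 1 := by
    rintro z ⟨hz, h0⟩
    rw [Metric.mem_ball, dist_zero_right]
    rcases lt_or_eq_of_le (by simpa [dist_zero_right] using hz : ‖z‖ ≤ 1) with h | h
    · exact h
    · exfalso
      have := hb z h
      rw [h0] at this
      norm_num at this
  have hfin : Z.Finite := by
    by_contra hinf
    have hinfZ : Z.Infinite := hinf
    obtain ⟨x, hxK, hacc⟩ := hinfZ.exists_accPt_of_subset_isCompact
      (isCompact_closedBall (0:ℂ) 1) hZK
    have hxcl : x ∈ closure Z := mem_closure_iff_clusterPt.mpr hacc.clusterPt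
    have hx0 : f x = 0 := by
      have hne : (𝓝[Z] x).NeBot := mem_closure_iff_nhdsWithin_neBot.mp hxcl
      have t1 : Filter.Tendsto f (𝓝[Z] x) (𝓝 (f x)) := (hc x hxK).mono hZK
      have t2 : Filter.Tendsto f (𝓝[Z] x) (𝓝 0) := by
        refine Filter.Tendsto.congr' ?_ tendsto_const_nhds
        exact (eventually_mem_nhdsWithin.mono fun z hz => hz.2.symm)
      exact tendsto_nhds_unique t1 t2
    have hxB : x ∈ Metric.ball (0:ℂ) 1 := hZball ⟨hxK, hx0⟩
    have han : AnalyticAt ℂ f x := (hd.analyticOnNhd Metric.isOpen_ball) x hxB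
    have hfreq : ∃ᶠ z in 𝓝[≠] x, f z = 0 := by
      rw [accPt_iff_frequently] at hacc
      rw [frequently_nhdsWithin_iff]
      exact hacc.mono fun z hz => ⟨hz.2.2, Set.mem_compl_singleton_iff.mpr hz.1⟩
    exact not_ev_zero hc hd hb hxB (han.frequently_zero_iff_eventually_zero.mp hfreq)
  refine blaschke_aux (∑ b ∈ hfin.toFinset, ordN f b) f hc hd hb hfin.toFinset ?_ ?_ le_rfl
  · rw [Set.Finite.coe_toFinset]
    exact hZball
  · intro z hz h0
    rw [Set.Finite.mem_toFinset]
    exact ⟨hz, h0⟩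
end
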